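/- arXiv:1704.02902 — 11 statements merged into one kernel-verified Lean document; each statement's English description precedes it below -/
import Mathlib

section
/- Let a, b, A1, A2 be real numbers with 0 < a < A1, 0 < b < A2, and a/A1 + b/A2 ≥ 1. Define the sets R1 := {(λ1,λ2) ∈ ℝ² : λ1 ≥ 0, 0 ≤ λ2 < b, λ1 < A1 + (a−A1)·λ2/b} and R2 := {(λ1,λ2) ∈ ℝ² : λ2 ≥ 0, 0 ≤ λ1 < a, λ2 < A2 + (b−A2)·λ1/a}. Then the union R1 ∪ R2 is a convex subset of ℝ². -/
/-- The stability region `R1 ∪ R2` of the two-user queue-aware random access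
system is convex when `a/A1 + b/A2 ≥ 1`. -/
theorem stability_region_convex (a b A1 A2 : ℝ)
    (ha : 0 < a) (haA1 : a < A1) (hb : 0 < b) (hbA2 : b < A2)
    (hconv : a / A1 + b / A2 ≥ 1) :
    Convex ℝ
      (({p : ℝ × ℝ | 0 ≤ p.1 ∧ 0 ≤ p.2 ∧ p.2 < b ∧
          p.1 < A1 + (a - A1) * p.2 / b} ∪
        {p : ℝ × ℝ | 0 ≤ p.2 ∧ 0 ≤ p.1 ∧ p.1 < a ∧
          p.2 < A2 + (b - A2) * p.1 / a}) : Set (ℝ × ℝ)) := by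
  have hA1 : (0:ℝ) < A1 := ha.trans haA1
  have hA2 : (0:ℝ) < A2 := hb.trans hbA2
  -- The convexity condition without divisions
  have hc : A1 * A2 ≤ a * A2 + b * A1 := by
    rw [ge_iff_le, div_add_div _ _ hA1.ne' hA2.ne',
      le_div_iff₀ (mul_pos hA1 hA2), one_mul] at hconv
    linarith
  -- helpful rewritings of the strict inequalities
  have e1 : ∀ p : ℝ × ℝ, (p.1 < A1 + (a - A1) * p.2 / b) ↔
      p.1 * b < A1 * b + (a - A1) * p.2 := by
    intro p
    rw [show A1 + (a - A1) * p.2 / b = (A1 * b + (a - A1) * p.2) / b by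
      field_simp, lt_div_iff₀ hb]
  have e2 : ∀ p : ℝ × ℝ, (p.2 < A2 + (b - A2) * p.1 / a) ↔
      p.2 * a < A2 * a + (b - A2) * p.1 := by
    intro p
    rw [show A2 + (b - A2) * p.1 / a = (A2 * a + (b - A2) * p.1) / a by
      field_simp, lt_div_iff₀ ha]
  have hset :
      (({p : ℝ × ℝ | 0 ≤ p.1 ∧ 0 ≤ p.2 ∧ p.2 < b ∧
          p.1 < A1 + (a - A1) * p.2 / b} ∪
        {p : ℝ × ℝ | 0 ≤ p.2 ∧ 0 ≤ p.1 ∧ p.1 < a ∧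
          p.2 < A2 + (b - A2) * p.1 / a}) : Set (ℝ × ℝ)) =
      ({p : ℝ × ℝ | 0 ≤ p.1} ∩ ({p : ℝ × ℝ | 0 ≤ p.2} ∩
        ({p : ℝ × ℝ | p.1 - (a - A1) / b * p.2 < A1} ∩
         {p : ℝ × ℝ | p.2 - (b - A2) / a * p.1 < A2}))) := by
    ext p
    simp only [Set.mem_union, Set.mem_inter_iff, Set.mem_setOf_eq]
    have e3 : (p.1 - (a - A1) / b * p.2 < A1) ↔ p.1 * b < A1 * b + (a - A1) * p.2 := by
      rw [sub_lt_iff_lt_add, show A1 + (a - A1) / b * p.2 = (A1 * b + (a - A1) * p.2) / b by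
        field_simp, lt_div_iff₀ hb]
    have e4 : (p.2 - (b - A2) / a * p.1 < A2) ↔ p.2 * a < A2 * a + (b - A2) * p.1 := by
      rw [sub_lt_iff_lt_add, show A2 + (b - A2) / a * p.1 = (A2 * a + (b - A2) * p.1) / a by
        field_simp, lt_div_iff₀ ha]
    rw [e1 p, e2 p, e3, e4]
    constructor
    · rintro (⟨h1, h2, h3, h4⟩ | ⟨h1, h2, h3, h4⟩)
      · refine ⟨h1, h2, h4, ?_⟩
        nlinarith [mul_nonneg (by linarith : (0:ℝ) ≤ b - p.2) (by linarith : (0:ℝ) ≤ a * A2 + b * A1 - A1 * A2),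
          mul_pos (by linarith : (0:ℝ) < A2 - b) (by linarith : (0:ℝ) < A1 * b + (a - A1) * p.2 - p.1 * b)]
      · refine ⟨h2, h1, ?_, h4⟩
        nlinarith [mul_nonneg (by linarith : (0:ℝ) ≤ a - p.1) (by linarith : (0:ℝ) ≤ a * A2 + b * A1 - A1 * A2),
          mul_pos (by linarith : (0:ℝ) < A1 - a) (by linarith : (0:ℝ) < A2 * a + (b - A2) * p.1 - p.2 * a)]
    · rintro ⟨h1, h2, h3, h4⟩
      by_cases h : p.2 < b
      · exact Or.inl ⟨h1, h2, h, h3⟩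
      · refine Or.inr ⟨h2, h1, ?_, h4⟩
        push_neg at h
        nlinarith [mul_nonneg (by linarith : (0:ℝ) ≤ A1 - a) (by linarith : (0:ℝ) ≤ p.2 - b)]
  rw [hset]
  refine (convex_halfSpace_ge ⟨fun x y => by simp, fun c x => by simp⟩ 0).inter
    ((convex_halfSpace_ge ⟨fun x y => by simp, fun c x => by simp⟩ 0).inter
      (Convex.inter ?_ ?_))
  · exact convex_halfSpace_lt
      ⟨fun x y => by simp [Prod.fst_add, Prod.snd_add]; ring,
       fun c x => by simp [Prod.smul_fst, Prod.smul_snd, smul_eq_mul]; ring⟩ A1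
  · exact convex_halfSpace_lt
      ⟨fun x y => by simp [Prod.fst_add, Prod.snd_add]; ring,
       fun c x => by simp [Prod.smul_fst, Prod.smul_snd, smul_eq_mul]; ring⟩ A2
end

section
/- Let a, b, A1, A2 be real numbers with a > 0, b > 0, A1 > 0, A2 > 0 and a·A2 + b·A1 = A1·A2 (i.e., a/A1 + b/A2 = 1). Define R1 := {(λ1,λ2) ∈ ℝ² : λ1 ≥ 0, 0 ≤ λ2 < b, λ1 < A1 + (a−A1)·λ2/b} and R2 := {(λ1,λ2) ∈ ℝ² : λ2 ≥ 0, 0 ≤ λ1 < a, λ2 < A2 + (b−A2)·λ1/a}. Then R1 ∪ R2 = {(λ1,λ2) ∈ ℝ² : λ1 ≥ 0, λ2 ≥ 0, λ1/A1 + λ2/A2 < 1}, i.e., the stability region is exactly the open triangle with legs A1 and A2 (the time-sharing region). -/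
/-- When `a/A1 + b/A2 = 1`, the stability region `R1 ∪ R2` coincides with the
open time-sharing triangle with legs `A1` and `A2`. -/
theorem stability_region_triangle (a b A1 A2 : ℝ)
    (ha : 0 < a) (hb : 0 < b) (hA1 : 0 < A1) (hA2 : 0 < A2)
    (heq : a * A2 + b * A1 = A1 * A2) :
    ({p : ℝ × ℝ | 0 ≤ p.1 ∧ 0 ≤ p.2 ∧ p.2 < b ∧
        p.1 < A1 + (a - A1) * p.2 / b} ∪
      {p : ℝ × ℝ | 0 ≤ p.2 ∧ 0 ≤ p.1 ∧ p.1 < a ∧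
        p.2 < A2 + (b - A2) * p.1 / a}) =
    {p : ℝ × ℝ | 0 ≤ p.1 ∧ 0 ≤ p.2 ∧ p.1 / A1 + p.2 / A2 < 1} := by
  ext ⟨x, y⟩
  simp only [Set.mem_union, Set.mem_setOf_eq]
  have e1 : ∀ z : ℝ, A1 + (a - A1) * z / b = (A1 * b + (a - A1) * z) / b := by
    intro z; field_simp
  have e2 : ∀ z : ℝ, A2 + (b - A2) * z / a = (A2 * a + (b - A2) * z) / a := by
    intro z; field_simp
  rw [e1, e2, lt_div_iff₀ hb, lt_div_iff₀ ha, div_add_div _ _ hA1.ne' hA2.ne',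
    div_lt_one (by positivity)]
  constructor
  · rintro (⟨hx, hy, hyb, h⟩ | ⟨hy, hx, hxa, h⟩)
    · refine ⟨hx, hy, ?_⟩
      nlinarith [mul_lt_mul_of_pos_right h hA2, mul_nonneg hy hA1.le]
    · refine ⟨hx, hy, ?_⟩
      nlinarith [mul_lt_mul_of_pos_right h hA1, mul_nonneg hx hA2.le]
  · rintro ⟨hx, hy, h⟩
    by_cases hyb : y < b
    · left
      refine ⟨hx, hy, hyb, ?_⟩
      nlinarith [mul_lt_mul_of_pos_right h hb, mul_nonneg hy hA1.le]
    · right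
      push_neg at hyb
      have hxa : x < a := by nlinarith
      refine ⟨hy, hx, hxa, ?_⟩
      nlinarith [mul_lt_mul_of_pos_right h ha, mul_nonneg hx hA2.le]
end

section
/- Let λ1 ≥ 0, λ2 > 0 and a ≥ 0, b ≥ 0 be real numbers with a + b ≤ 1. Then for all complex x, y with ‖x‖ = 1, ‖y‖ = 1 and y ≠ 1, one has ‖xy(1 − a − b) + y·a + x·b‖ < ‖(1 + λ1(1−x))·(1 + λ2(1−y))‖; equivalently, ‖Ψ(x,y)‖ < 1 where Ψ(x,y) := (xy(1−a−b) + ya + xb)/((1+λ1(1−x))(1+λ2(1−y))). -/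
lemma psi_aux_sq (l : ℝ) (x : ℂ) (hx : ‖x‖ = 1) :
    ‖1 + (l : ℂ) * (1 - x)‖ ^ 2 = 1 + 2 * l * (1 + l) * (1 - x.re) := by
  have h1 : x.re ^ 2 + x.im ^ 2 = 1 := by
    have h := Complex.sq_norm x
    rw [hx, Complex.normSq_apply] at h
    nlinarith [h]
  rw [Complex.sq_norm, Complex.normSq_apply]
  simp [Complex.add_re, Complex.add_im, Complex.mul_re, Complex.mul_im,
    Complex.sub_re, Complex.sub_im]
  linear_combination (l ^ 2) * h1

lemma psi_aux_ge (l : ℝ) (hl : 0 ≤ l) (x : ℂ) (hx : ‖x‖ = 1) :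
    1 ≤ ‖1 + (l : ℂ) * (1 - x)‖ := by
  have hre : x.re ≤ 1 := by
    calc x.re ≤ ‖x‖ := Complex.re_le_norm x
    _ = 1 := hx
  have h := psi_aux_sq l x hx
  nlinarith [norm_nonneg (1 + (l : ℂ) * (1 - x)),
    mul_nonneg (mul_nonneg (by linarith : (0:ℝ) ≤ 2 * l) (by linarith : (0:ℝ) ≤ 1 + l))
      (by linarith : (0:ℝ) ≤ 1 - x.re)]

lemma psi_aux_gt (l : ℝ) (hl : 0 < l) (x : ℂ) (hx : ‖x‖ = 1) (hx1 : x ≠ 1) :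
    1 < ‖1 + (l : ℂ) * (1 - x)‖ := by
  have h1 : x.re ^ 2 + x.im ^ 2 = 1 := by
    have h := Complex.sq_norm x
    rw [hx, Complex.normSq_apply] at h
    nlinarith [h]
  have hre : x.re ≤ 1 := by
    calc x.re ≤ ‖x‖ := Complex.re_le_norm x
    _ = 1 := hx
  have hlt : x.re < 1 := by
    rcases lt_or_eq_of_le hre with h | h
    · exact h
    · exfalso; apply hx1
      have him : x.im = 0 := by nlinarith
      apply Complex.ext <;> simp [← h, him]
  have h := psi_aux_sq l x hx
  nlinarith [norm_nonneg (1 + (l : ℂ) * (1 - x)),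
    mul_pos (mul_pos (by linarith : (0:ℝ) < 2 * l) (by linarith : (0:ℝ) < 1 + l))
      (by linarith : (0:ℝ) < 1 - x.re)]

/-- The Rouché inequality `‖Ψ(x,y)‖ < 1` on the torus (with `y ≠ 1`) used in
the proof of Lemma 1. -/
theorem psi_norm_lt_one (l1 l2 a b : ℝ)
    (hl1 : 0 ≤ l1) (hl2 : 0 < l2) (ha : 0 ≤ a) (hb : 0 ≤ b) (hab : a + b ≤ 1)
    (x y : ℂ) (hx : ‖x‖ = 1) (hy : ‖y‖ = 1) (hy1 : y ≠ 1) :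
    ‖x * y * (1 - (a : ℂ) - (b : ℂ)) + y * (a : ℂ) + x * (b : ℂ)‖ <
      ‖(1 + (l1 : ℂ) * (1 - x)) * (1 + (l2 : ℂ) * (1 - y))‖ ∧
    ‖(x * y * (1 - (a : ℂ) - (b : ℂ)) + y * (a : ℂ) + x * (b : ℂ)) /
        ((1 + (l1 : ℂ) * (1 - x)) * (1 + (l2 : ℂ) * (1 - y)))‖ < 1 := by
  have hnum : ‖x * y * (1 - (a : ℂ) - (b : ℂ)) + y * (a : ℂ) + x * (b : ℂ)‖ ≤ 1 := by
    calc ‖x * y * (1 - (a : ℂ) - (b : ℂ)) + y * (a : ℂ) + x * (b : ℂ)‖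
        ≤ ‖x * y * (1 - (a : ℂ) - (b : ℂ)) + y * (a : ℂ)‖ + ‖x * (b : ℂ)‖ :=
          norm_add_le _ _
      _ ≤ ‖x * y * (1 - (a : ℂ) - (b : ℂ))‖ + ‖y * (a : ℂ)‖ + ‖x * (b : ℂ)‖ := by
          gcongr; exact norm_add_le _ _
      _ = (1 - a - b) + a + b := by
          have hn1 : ‖(1 - (a : ℂ) - (b : ℂ))‖ = 1 - a - b := by
            rw [show (1 - (a : ℂ) - (b : ℂ)) = ((1 - a - b : ℝ) : ℂ) by push_cast; ring,
              Complex.norm_real]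
            exact Real.norm_of_nonneg (by linarith)
          have hn2 : ‖((a : ℝ) : ℂ)‖ = a := by
            rw [Complex.norm_real]; exact Real.norm_of_nonneg ha
          have hn3 : ‖((b : ℝ) : ℂ)‖ = b := by
            rw [Complex.norm_real]; exact Real.norm_of_nonneg hb
          rw [norm_mul, norm_mul, norm_mul, norm_mul, hx, hy, hn1, hn2, hn3]
          ring
      _ = 1 := by ring
  have h1 := psi_aux_ge l1 hl1 x hx
  have h2 := psi_aux_gt l2 hl2 y hy hy1
  have hden : 1 < ‖(1 + (l1 : ℂ) * (1 - x)) * (1 + (l2 : ℂ) * (1 - y))‖ := by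
    rw [norm_mul]
    nlinarith
  have hmain : ‖x * y * (1 - (a : ℂ) - (b : ℂ)) + y * (a : ℂ) + x * (b : ℂ)‖ <
      ‖(1 + (l1 : ℂ) * (1 - x)) * (1 + (l2 : ℂ) * (1 - y))‖ := lt_of_le_of_lt hnum hden
  refine ⟨hmain, ?_⟩
  rw [norm_div]
  rw [div_lt_one (by linarith)]
  linarith
end

section
/- Let λ1 > 0, λ2 > 0, a > 0, b > 0 be real with a + b ≤ 1, and let y be a complex number with ‖y‖ = 1 and y ≠ 1. Then there exists exactly one complex number x with ‖x‖ < 1 satisfying â(y)·x² + b̂(y)·x + ĉ(y) = 0, where â(y) = λ1·y·(λ2(y−1) − 1), b̂(y) = y·(λ1+λ2+λ1λ2+a+b) − b − λ2(1+λ1)·y², ĉ(y) = −a·y. (Equivalently, the kernel equation R(x,y) = 0 has exactly one root x = X₀(y) in the open unit disk.) -/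
set_option maxHeartbeats 1000000 in
/-- Lemma 1, first assertion: for `‖y‖ = 1`, `y ≠ 1`, the kernel equation
`R(x,y) = 0` has exactly one root `x = X₀(y)` in the open unit disk. -/
theorem kernel_unique_root_in_disk (l1 l2 a b : ℝ)
    (hl1 : 0 < l1) (hl2 : 0 < l2) (ha : 0 < a) (hb : 0 < b) (hab : a + b ≤ 1)
    (y : ℂ) (hy : ‖y‖ = 1) (hy1 : y ≠ 1) :
    ∃! x : ℂ, ‖x‖ < 1 ∧
      ((l1 : ℂ) * y * ((l2 : ℂ) * (y - 1) - 1)) * x ^ 2 +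
        (y * ((l1 : ℂ) + (l2 : ℂ) + (l1 : ℂ) * (l2 : ℂ) + (a : ℂ) + (b : ℂ)) -
          (b : ℂ) - (l2 : ℂ) * (1 + (l1 : ℂ)) * y ^ 2) * x +
        (-(a : ℂ) * y) = 0 := by
  have hy0 : y ≠ 0 := by intro h; rw [h] at hy; simp at hy
  have hyinv : ‖y⁻¹‖ = 1 := by rw [norm_inv, hy]; norm_num
  -- real part of y is < 1
  have hyre : y.re < 1 := by
    by_contra h
    push_neg at h
    have h2 : ‖y‖ = 1 := by rw [hy]
    have h3 : y.re * y.re + y.im * y.im = 1 := by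
      have := Complex.normSq_eq_norm_sq y
      rw [h2] at this
      simpa [Complex.normSq_apply] using this
    have h4 : y.re ≤ 1 := by
      calc y.re ≤ ‖y‖ := Complex.re_le_norm y
      _ = 1 := h2
    have h5 : y.re = 1 := le_antisymm h4 h
    have h6 : y.im = 0 := by nlinarith
    exact hy1 (Complex.ext h5 h6)
  set w : ℂ := 1 + (l2 : ℂ) * (1 - y) with hwdef
  have hwre : 1 < w.re := by
    rw [hwdef]
    simp [Complex.add_re, Complex.mul_re, Complex.ofReal_re, Complex.ofReal_im]
    nlinarith
  have hW : 1 < ‖w‖ := by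
    calc (1:ℝ) < w.re := hwre
    _ ≤ ‖w‖ := Complex.re_le_norm w
    _ = ‖w‖ := rfl
  have hW0 : (0:ℝ) < ‖w‖ := by linarith
  have hw0 : w ≠ 0 := by intro h; rw [h] at hW; norm_num at hW
  clear_value w
  set β : ℂ := (l1 : ℂ) * w with hβdef
  set α : ℂ := (1 + (l1 : ℂ)) * w - (1 - (a : ℂ) - (b : ℂ)) - (b : ℂ) * y⁻¹ with hαdef
  clear_value β α
  have hβ0 : β ≠ 0 := by
    rw [hβdef]
    exact mul_ne_zero (by exact_mod_cast hl1.ne') hw0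
  have hnormβ : ‖β‖ = l1 * ‖w‖ := by
    rw [hβdef, norm_mul, Complex.norm_real]
    rw [Real.norm_eq_abs, abs_of_pos hl1]
  -- the original expression in terms of the reduced quadratic
  have key : ∀ x : ℂ,
      (((l1 : ℂ) * y * ((l2 : ℂ) * (y - 1) - 1)) * x ^ 2 +
        (y * ((l1 : ℂ) + (l2 : ℂ) + (l1 : ℂ) * (l2 : ℂ) + (a : ℂ) + (b : ℂ)) -
          (b : ℂ) - (l2 : ℂ) * (1 + (l1 : ℂ)) * y ^ 2) * x +
        (-(a : ℂ) * y) = 0) ↔ β * x ^ 2 - α * x + (a : ℂ) = 0 := by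
    intro x
    have hexp : ((l1 : ℂ) * y * ((l2 : ℂ) * (y - 1) - 1)) * x ^ 2 +
        (y * ((l1 : ℂ) + (l2 : ℂ) + (l1 : ℂ) * (l2 : ℂ) + (a : ℂ) + (b : ℂ)) -
          (b : ℂ) - (l2 : ℂ) * (1 + (l1 : ℂ)) * y ^ 2) * x +
        (-(a : ℂ) * y) = -y * (β * x ^ 2 - α * x + (a : ℂ)) := by
      rw [hβdef, hαdef, hwdef]
      field_simp
      ring
    rw [hexp, neg_mul, neg_eq_zero, mul_eq_zero]
    simp [hy0]
  -- boundary/star estimate for any root of the reduced quadratic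
  have star : ∀ r : ℂ, β * r ^ 2 - α * r + (a : ℂ) = 0 →
      ‖r‖ * ‖w‖ * (1 + l1 * (1 - ‖r‖)) ≤ a + ‖r‖ * (1 - a) := by
    intro r h
    have hid : r * (1 + (l1 : ℂ) * (1 - r)) * w
        = (a : ℂ) + r * ((1 - (a : ℂ) - (b : ℂ)) + (b : ℂ) * y⁻¹) := by
      rw [hβdef, hαdef] at h
      linear_combination -h
    have hnorm1 : ‖(a : ℂ) + r * ((1 - (a : ℂ) - (b : ℂ)) + (b : ℂ) * y⁻¹)‖
        ≤ a + ‖r‖ * (1 - a) := by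
      have h1 : ‖(1 - (a : ℂ) - (b : ℂ)) + (b : ℂ) * y⁻¹‖ ≤ 1 - a := by
        calc ‖(1 - (a : ℂ) - (b : ℂ)) + (b : ℂ) * y⁻¹‖
            ≤ ‖(1 - (a : ℂ) - (b : ℂ))‖ + ‖(b : ℂ) * y⁻¹‖ := norm_add_le _ _
        _ = (1 - a - b) + b := by
            rw [norm_mul, hyinv, Complex.norm_real, mul_one]
            have : (1 - (a : ℂ) - (b : ℂ)) = ((1 - a - b : ℝ) : ℂ) := by push_cast; ring
            rw [this, Complex.norm_real, Real.norm_eq_abs, Real.norm_eq_abs,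
              abs_of_nonneg (by linarith), abs_of_pos hb]
        _ = 1 - a := by ring
      calc ‖(a : ℂ) + r * ((1 - (a : ℂ) - (b : ℂ)) + (b : ℂ) * y⁻¹)‖
          ≤ ‖(a : ℂ)‖ + ‖r * ((1 - (a : ℂ) - (b : ℂ)) + (b : ℂ) * y⁻¹)‖ := norm_add_le _ _
      _ = a + ‖r‖ * ‖(1 - (a : ℂ) - (b : ℂ)) + (b : ℂ) * y⁻¹‖ := by
          rw [norm_mul, Complex.norm_real, Real.norm_eq_abs, abs_of_pos ha]
      _ ≤ a + ‖r‖ * (1 - a) := by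
          have := norm_nonneg r
          nlinarith
    have hu : 1 + l1 * (1 - ‖r‖) ≤ ‖1 + (l1 : ℂ) * (1 - r)‖ := by
      have hre : (1 + (l1 : ℂ) * (1 - r)).re = 1 + l1 * (1 - r.re) := by
        simp [Complex.add_re, Complex.mul_re, Complex.sub_re, Complex.ofReal_re,
          Complex.ofReal_im, Complex.one_re, Complex.sub_im, Complex.one_im]
      have h2 : (1 + (l1 : ℂ) * (1 - r)).re ≤ ‖1 + (l1 : ℂ) * (1 - r)‖ :=
        Complex.re_le_norm _
      have h3 : r.re ≤ ‖r‖ := Complex.re_le_norm r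
      rw [hre] at h2
      nlinarith
    have hLHS : ‖r * (1 + (l1 : ℂ) * (1 - r)) * w‖
        = ‖r‖ * ‖1 + (l1 : ℂ) * (1 - r)‖ * ‖w‖ := by
      rw [norm_mul, norm_mul]
    have := congrArg norm hid
    rw [hLHS] at this
    have h4 : ‖r‖ * ‖1 + (l1 : ℂ) * (1 - r)‖ * ‖w‖ ≤ a + ‖r‖ * (1 - a) := by
      rw [this]; exact hnorm1
    have h5 := norm_nonneg r
    nlinarith [mul_nonneg (mul_nonneg h5 hW0.le) (sub_nonneg.2 hu)]
  -- no root on the unit circle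
  have notone : ∀ r : ℂ, β * r ^ 2 - α * r + (a : ℂ) = 0 → ‖r‖ ≠ 1 := by
    intro r h h1
    have := star r h
    rw [h1] at this
    nlinarith
  -- roots strictly inside satisfy l1 * ‖w‖ * ‖r‖^2 < a
  have small : ∀ r : ℂ, β * r ^ 2 - α * r + (a : ℂ) = 0 → ‖r‖ < 1 →
      l1 * ‖w‖ * ‖r‖ ^ 2 < a := by
    intro r h hr
    by_contra hge
    push_neg at hge
    have hs := star r h
    have hm := norm_nonneg r
    set m := ‖r‖ with hm'
    rcases eq_or_lt_of_le hm with h0 | h0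
    · rw [← h0] at hge; simp at hge; nlinarith
    · nlinarith [mul_pos h0 (sub_pos.2 hW), sq_nonneg (1 - m),
        mul_nonneg (mul_nonneg (mul_nonneg hl1.le hW0.le) h0.le) (sq_nonneg (1 - m))]
  -- roots of the quadratic
  obtain ⟨d, hd⟩ := IsAlgClosed.exists_pow_nat_eq (k := ℂ) (α ^ 2 - 4 * β * (a : ℂ))
    (n := 2) (by norm_num)
  set r1 : ℂ := (α + d) / (2 * β) with hr1def
  set r2 : ℂ := (α - d) / (2 * β) with hr2def
  clear_value r1 r2
  have h2β : (2 : ℂ) * β ≠ 0 := by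
    exact mul_ne_zero two_ne_zero hβ0
  have hsumv : β * (r1 + r2) = α := by
    rw [hr1def, hr2def]
    field_simp
    ring
  have hprodv : β * (r1 * r2) = (a : ℂ) := by
    rw [hr1def, hr2def]
    field_simp
    linear_combination -hd
  have hfact : ∀ x : ℂ, β * x ^ 2 - α * x + (a : ℂ) = β * (x - r1) * (x - r2) := by
    intro x
    linear_combination x * hsumv - hprodv
  -- main lemma given a factorization with the first root inside the disk
  have main : ∀ s t : ℂ,
      (∀ x : ℂ, β * x ^ 2 - α * x + (a : ℂ) = β * (x - s) * (x - t)) → ‖s‖ < 1 →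
      ∃! x : ℂ, ‖x‖ < 1 ∧
      ((l1 : ℂ) * y * ((l2 : ℂ) * (y - 1) - 1)) * x ^ 2 +
        (y * ((l1 : ℂ) + (l2 : ℂ) + (l1 : ℂ) * (l2 : ℂ) + (a : ℂ) + (b : ℂ)) -
          (b : ℂ) - (l2 : ℂ) * (1 + (l1 : ℂ)) * y ^ 2) * x +
        (-(a : ℂ) * y) = 0 := by
    intro s t hf hs
    have hqs : β * s ^ 2 - α * s + (a : ℂ) = 0 := by rw [hf s]; ring
    have hqt : β * t ^ 2 - α * t + (a : ℂ) = 0 := by rw [hf t]; ring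
    have hprod : (a : ℂ) = β * s * t := by linear_combination hf 0
    have hprodn : a = l1 * ‖w‖ * (‖s‖ * ‖t‖) := by
      have := congrArg norm hprod
      rw [norm_mul, norm_mul, hnormβ, Complex.norm_real, Real.norm_eq_abs,
        abs_of_pos ha] at this
      rw [this]; ring
    refine ⟨s, ⟨hs, (key s).2 hqs⟩, ?_⟩
    rintro x' ⟨hx'lt, hx'root⟩
    have hqx' : β * x' ^ 2 - α * x' + (a : ℂ) = 0 := (key x').1 hx'root
    have : β * (x' - s) * (x' - t) = 0 := by rw [← hf x']; exact hqx'
    rcases mul_eq_zero.1 this with h1 | h2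
    · rcases mul_eq_zero.1 h1 with h3 | h4
      · exact absurd h3 hβ0
      · exact sub_eq_zero.1 h4
    · -- x' = t : both roots inside the disk, contradiction
      have hxt : x' = t := sub_eq_zero.1 h2
      exfalso
      have ht1 : ‖t‖ < 1 := by rw [← hxt]; exact hx'lt
      have h5 := small s hqs hs
      have h6 := small t hqt ht1
      nlinarith [norm_nonneg s, norm_nonneg t, sq_nonneg (‖s‖ - ‖t‖),
        mul_nonneg (mul_nonneg hl1.le hW0.le) (sq_nonneg ‖s‖),
        mul_nonneg (mul_nonneg hl1.le hW0.le) (sq_nonneg ‖t‖)]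
  -- existence of a root inside the disk
  have hex : ‖r1‖ < 1 ∨ ‖r2‖ < 1 := by
    by_contra h
    push_neg at h
    obtain ⟨h1, h2⟩ := h
    have hq1 : β * r1 ^ 2 - α * r1 + (a : ℂ) = 0 := by rw [hfact r1]; ring
    have hq2 : β * r2 ^ 2 - α * r2 + (a : ℂ) = 0 := by rw [hfact r2]; ring
    have hm1 : 1 < ‖r1‖ := lt_of_le_of_ne h1 (Ne.symm (notone r1 hq1))
    have hm2 : 1 < ‖r2‖ := lt_of_le_of_ne h2 (Ne.symm (notone r2 hq2))
    have hprod : (a : ℂ) = β * r1 * r2 := by linear_combination hfact 0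
    have hprodn : a = l1 * ‖w‖ * (‖r1‖ * ‖r2‖) := by
      have := congrArg norm hprod
      rw [norm_mul, norm_mul, hnormβ, Complex.norm_real, Real.norm_eq_abs,
        abs_of_pos ha] at this
      rw [this]; ring
    have hsum : α = β * (r1 + r2) := by
      linear_combination (hfact 0) - (hfact 1)
    have hαub : ‖α‖ ≤ l1 * ‖w‖ * (‖r1‖ + ‖r2‖) := by
      rw [hsum, norm_mul, hnormβ]
      have := norm_add_le r1 r2
      nlinarith [mul_nonneg hl1.le hW0.le]
    have hαlb : (1 + l1) * ‖w‖ - (1 - a) ≤ ‖α‖ := by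
      have hα' : α = (1 + (l1 : ℂ)) * w - ((1 - (a : ℂ) - (b : ℂ)) + (b : ℂ) * y⁻¹) := by
        rw [hαdef]; ring
      have h3 : ‖(1 - (a : ℂ) - (b : ℂ)) + (b : ℂ) * y⁻¹‖ ≤ 1 - a := by
        calc ‖(1 - (a : ℂ) - (b : ℂ)) + (b : ℂ) * y⁻¹‖
            ≤ ‖(1 - (a : ℂ) - (b : ℂ))‖ + ‖(b : ℂ) * y⁻¹‖ := norm_add_le _ _
        _ = (1 - a - b) + b := by
            rw [norm_mul, hyinv, Complex.norm_real, mul_one]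
            have : (1 - (a : ℂ) - (b : ℂ)) = ((1 - a - b : ℝ) : ℂ) := by push_cast; ring
            rw [this, Complex.norm_real, Real.norm_eq_abs, Real.norm_eq_abs,
              abs_of_nonneg (by linarith), abs_of_pos hb]
        _ = 1 - a := by ring
      have h4 : ‖(1 + (l1 : ℂ)) * w‖ = (1 + l1) * ‖w‖ := by
        rw [norm_mul]
        have : ((1 : ℂ) + (l1 : ℂ)) = ((1 + l1 : ℝ) : ℂ) := by push_cast; ring
        rw [this, Complex.norm_real, Real.norm_eq_abs, abs_of_pos (by linarith)]
      have h5 : ‖(1 + (l1 : ℂ)) * w‖ - ‖(1 - (a : ℂ) - (b : ℂ)) + (b : ℂ) * y⁻¹‖ ≤ ‖α‖ := by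
        rw [hα']; exact norm_sub_norm_le _ _
      rw [h4] at h5
      linarith
    have ha1 : a ≤ 1 := by linarith
    nlinarith [mul_pos (sub_pos.2 hm1) (sub_pos.2 hm2),
      mul_pos (sub_pos.2 hW) (mul_pos (lt_trans one_pos hm1) (lt_trans one_pos hm2)),
      mul_pos (mul_pos hl1 hW0) (mul_pos (lt_trans one_pos hm1) (lt_trans one_pos hm2))]
  rcases hex with h | h
  · exact main r1 r2 hfact h
  · refine main r2 r1 (fun x => ?_) h
    rw [hfact x]; ring
end

section
/- Let λ1 > 0 and a > 0 be real. For every nonzero complex x with 1 + λ1(1−x) ≠ 0, the kernel at y = 1 factors as R(x,1) = (x − 1)·(a/x − λ1). Consequently, if λ1 < a, then the only complex x with ‖x‖ ≤ 1, x ≠ 0, and R(x,1) = 0 is x = 1. -/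
/-- Lemma 1, second assertion: the kernel at `y = 1` factors as
`R(x,1) = (x − 1)·(a/x − λ1)`; consequently, if `λ1 < a`, the only root of
`R(·,1)` in the closed unit disk is `x = 1`. -/
theorem kernel_at_one (l1 l2 a b : ℝ) (hl1 : 0 < l1) (ha : 0 < a) :
    let R : ℂ → ℂ → ℂ := fun x y =>
      (1 + (l1 : ℂ) * (1 - x)) * (1 + (l2 : ℂ) * (1 - y)) - 1 +
        (a : ℂ) * (1 - 1 / x) + (b : ℂ) * (1 - 1 / y)
    (∀ x : ℂ, x ≠ 0 → 1 + (l1 : ℂ) * (1 - x) ≠ 0 →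
      R x 1 = (x - 1) * ((a : ℂ) / x - (l1 : ℂ))) ∧
    (l1 < a → ∀ x : ℂ, ‖x‖ ≤ 1 → x ≠ 0 → R x 1 = 0 → x = 1) := by
  intro R
  have key : ∀ x : ℂ, x ≠ 0 → R x 1 = (x - 1) * ((a : ℂ) / x - (l1 : ℂ)) := by
    intro x hx
    simp only [R]
    field_simp
    ring
  refine ⟨fun x hx _ => key x hx, fun hlt x hnorm hx hR => ?_⟩
  rw [key x hx] at hR
  rcases mul_eq_zero.mp hR with h | h
  · exact sub_eq_zero.mp h
  · exfalso
    have hxa : (a : ℂ) = l1 * x := by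
      field_simp at h
      linear_combination h
    have := congrArg norm hxa
    rw [norm_mul, Complex.norm_real, Complex.norm_real,
      Real.norm_of_nonneg ha.le, Real.norm_of_nonneg hl1.le] at this
    nlinarith [norm_nonneg x]
end

section
/- Let λ1 > 0, λ2 > 0, a > 0, b > 0 be real with a + b ≤ 1, λ1 < a, and λ2 < b. Define a(x) := λ2·x·(λ1(x−1) − 1), b(x) := x·(λ1+λ2+λ1λ2+a+b) − a − λ1(1+λ2)·x², c(x) := −b·x, and D_x(x) := b(x)² − 4·a(x)·c(x). Then there exist real numbers x1, x2, x3, x4 with 0 < x1 < x2 ≤ 1 < x3 < x4 < (1+λ1)/λ1 such that D_x(x) < 0 for all x ∈ (x1,x2) ∪ (x3,x4) and D_x(x) > 0 for all x ∈ (−∞,x1) ∪ (x2,x3) ∪ (x4,∞). -/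
open Polynomial Set

lemma quartic_factor (c4 c3 c2 c1 c0 y1 y2 y3 y4 : ℝ) (hc4 : c4 ≠ 0)
    (h12 : y1 ≠ y2) (h13 : y1 ≠ y3) (h14 : y1 ≠ y4)
    (h23 : y2 ≠ y3) (h24 : y2 ≠ y4) (h34 : y3 ≠ y4)
    (e1 : c4*y1^4 + c3*y1^3 + c2*y1^2 + c1*y1 + c0 = 0)
    (e2 : c4*y2^4 + c3*y2^3 + c2*y2^2 + c1*y2 + c0 = 0)
    (e3 : c4*y3^4 + c3*y3^3 + c2*y3^2 + c1*y3 + c0 = 0)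
    (e4 : c4*y4^4 + c3*y4^3 + c2*y4^2 + c1*y4 + c0 = 0) :
    ∀ x : ℝ, c4*x^4 + c3*x^3 + c2*x^2 + c1*x + c0 =
      c4 * (((x - y1)*(x - y2))*((x - y3)*(x - y4))) := by
  have heval : ∀ x : ℝ,
      (C c4 * X^4 + C c3 * X^3 + C c2 * X^2 + C c1 * X + C c0 : ℝ[X]).eval x =
      c4*x^4 + c3*x^3 + c2*x^2 + c1*x + c0 := by
    intro x; simp
  set P : ℝ[X] := C c4 * X^4 + C c3 * X^3 + C c2 * X^2 + C c1 * X + C c0 with hPdef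
  have hPdeg : P.natDegree = 4 := by rw [hPdef]; compute_degree!
  have hP0 : P ≠ 0 := fun h => by simp [h] at hPdeg
  have hlc : P.leadingCoeff = c4 := by
    rw [Polynomial.leadingCoeff, hPdeg, hPdef]
    simp [coeff_X_pow]
  have hmem : ∀ y : ℝ, c4*y^4 + c3*y^3 + c2*y^2 + c1*y + c0 = 0 → y ∈ P.roots := by
    intro y hy
    exact Polynomial.mem_roots'.mpr ⟨hP0, by rw [Polynomial.IsRoot, heval, hy]⟩
  have hnodup : ({y1, y2, y3, y4} : Multiset ℝ).Nodup := by
    simp [h12, h13, h14, h23, h24, h34]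
  have hle : ({y1, y2, y3, y4} : Multiset ℝ) ≤ P.roots := by
    rw [Multiset.le_iff_subset hnodup]
    intro y hy
    simp only [Multiset.insert_eq_cons, Multiset.mem_cons, Multiset.mem_singleton] at hy
    rcases hy with rfl | rfl | rfl | rfl
    exacts [hmem _ e1, hmem _ e2, hmem _ e3, hmem _ e4]
  have hcard : P.roots.card ≤ 4 := hPdeg ▸ P.card_roots'
  have heq : ({y1, y2, y3, y4} : Multiset ℝ) = P.roots :=
    Multiset.eq_of_le_of_card_le hle (by simpa using hcard)
  have hsplits : P.Splits :=
    Polynomial.splits_iff_card_roots.mpr (by rw [← heq, hPdeg]; rfl)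
  have hfact := Polynomial.Splits.eq_prod_roots hsplits
  intro x
  have := congrArg (Polynomial.eval x) hfact
  rw [heval, hlc, ← heq] at this
  rw [this]
  simp only [Multiset.insert_eq_cons, Multiset.map_cons, Multiset.map_singleton,
    Multiset.prod_cons, Multiset.prod_singleton, eval_mul, eval_sub, eval_C, eval_X]
  ring

/-- Lemma 2, first part: the discriminant `D_x(x) = b(x)² − 4a(x)c(x)` of the
kernel, viewed as a quadratic in `y`, has four real branch points
`0 < x1 < x2 ≤ 1 < x3 < x4 < (1+λ1)/λ1`, is negative on
`(x1,x2) ∪ (x3,x4)` and positive on `(−∞,x1) ∪ (x2,x3) ∪ (x4,∞)`. -/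
theorem branch_points_x (l1 l2 a b : ℝ)
    (hl1 : 0 < l1) (hl2 : 0 < l2) (ha : 0 < a) (hb : 0 < b)
    (hab : a + b ≤ 1) (hst1 : l1 < a) (hst2 : l2 < b) :
    ∃ x1 x2 x3 x4 : ℝ,
      0 < x1 ∧ x1 < x2 ∧ x2 ≤ 1 ∧ 1 < x3 ∧ x3 < x4 ∧ x4 < (1 + l1) / l1 ∧
      (∀ x : ℝ, x ∈ Set.Ioo x1 x2 ∪ Set.Ioo x3 x4 →
        (x * (l1 + l2 + l1 * l2 + a + b) - a - l1 * (1 + l2) * x ^ 2) ^ 2 -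
          4 * (l2 * x * (l1 * (x - 1) - 1)) * (-b * x) < 0) ∧
      (∀ x : ℝ, x ∈ Set.Iio x1 ∪ Set.Ioo x2 x3 ∪ Set.Ioi x4 →
        0 < (x * (l1 + l2 + l1 * l2 + a + b) - a - l1 * (1 + l2) * x ^ 2) ^ 2 -
          4 * (l2 * x * (l1 * (x - 1) - 1)) * (-b * x)) := by
  have hx0 : (1:ℝ) < (1 + l1) / l1 := by
    rw [lt_div_iff₀ hl1]; linarith
  set g : ℝ → ℝ := fun x =>
    x * (l1 + l2 + l1 * l2 + a + b) - a - l1 * (1 + l2) * x ^ 2 with hg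
  set F : ℝ → ℝ := fun x =>
    (x * (l1 + l2 + l1 * l2 + a + b) - a - l1 * (1 + l2) * x ^ 2) ^ 2 -
      4 * (l2 * x * (l1 * (x - 1) - 1)) * (-b * x) with hF
  have hgcont : Continuous g := by rw [hg]; fun_prop
  have hFcont : Continuous F := by rw [hF]; fun_prop
  have hg0v : g 0 = -a := by simp only [hg]; ring
  have hg1v : g 1 = l2 + b := by simp only [hg]; ring
  have hgsv : l1^2 * g ((1 + l1) / l1) = l1*(1+l1)*(a+b-1) - a*l1^2 := by
    simp only [hg]; field_simp; ring
  have haux : l1*(1+l1)*(a+b-1) ≤ 0 :=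
    mul_nonpos_of_nonneg_of_nonpos (by positivity) (by linarith)
  have hal : 0 < a * l1^2 := by positivity
  have hgs : g ((1 + l1) / l1) < 0 := by
    by_contra h
    push_neg at h
    have h2 := mul_nonneg (sq_nonneg l1) h
    linarith
  -- roots of the quadratic g
  obtain ⟨r1, hr1m, hgr1⟩ := intermediate_value_Ioo (zero_le_one)
    hgcont.continuousOn (show (0:ℝ) ∈ Set.Ioo (g 0) (g 1) from
      Set.mem_Ioo.mpr ⟨by rw [hg0v]; linarith, by rw [hg1v]; positivity⟩)
  obtain ⟨r2, hr2m, hgr2⟩ := intermediate_value_Ioo' hx0.le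
    hgcont.continuousOn (show (0:ℝ) ∈ Set.Ioo (g ((1 + l1) / l1)) (g 1) from
      Set.mem_Ioo.mpr ⟨hgs, by rw [hg1v]; positivity⟩)
  -- sign of F at key points
  have hF0 : 0 < F 0 := by
    have e : F 0 = a^2 := by simp only [hF]; ring
    rw [e]; positivity
  have hF1 : 0 < F 1 := by
    have e : F 1 = (l2 - b)^2 := by simp only [hF]; ring
    have hne : l2 - b ≠ 0 := sub_ne_zero.mpr hst2.ne
    rw [e]; positivity
  have hFr1 : F r1 < 0 := by
    have e : F r1 = (g r1)^2 + 4*b*l2*r1^2*(l1*(r1-1)-1) := by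
      simp only [hF, hg]; ring
    rw [hgr1] at e
    have e' : F r1 = 4*b*l2*r1^2*(l1*(r1-1)-1) := by rw [e]; ring
    have h1 : l1*(r1-1)-1 < 0 := by nlinarith [mul_pos hl1 (sub_pos.mpr hr1m.2)]
    have h2 : 0 < 4*b*l2*r1^2 := by
      have := hr1m.1; positivity
    have h3 := mul_neg_of_pos_of_neg h2 h1
    linarith
  have hFr2 : F r2 < 0 := by
    have e : F r2 = (g r2)^2 + 4*b*l2*r2^2*(l1*(r2-1)-1) := by
      simp only [hF, hg]; ring
    rw [hgr2] at e
    have e' : F r2 = 4*b*l2*r2^2*(l1*(r2-1)-1) := by rw [e]; ring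
    have hlt := (lt_div_iff₀ hl1).mp hr2m.2
    have h1 : l1*(r2-1)-1 < 0 := by nlinarith [hlt]
    have h2 : 0 < 4*b*l2*r2^2 := by
      have : (0:ℝ) < r2 := lt_trans one_pos hr2m.1
      positivity
    have h3 := mul_neg_of_pos_of_neg h2 h1
    linarith
  have hFs : 0 < F ((1 + l1) / l1) := by
    have hz : l1*(((1 + l1) / l1)-1)-1 = 0 := by field_simp; ring
    have e : F ((1 + l1) / l1) = (g ((1 + l1) / l1))^2
        + 4*b*l2*((1 + l1) / l1)^2*(l1*(((1 + l1) / l1)-1)-1) := by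
      simp only [hF, hg]; ring
    rw [hz] at e
    have e' : F ((1 + l1) / l1) = (g ((1 + l1) / l1))^2 := by rw [e]; ring
    have hne : g ((1 + l1) / l1) ≠ 0 := ne_of_lt hgs
    rw [e']; positivity
  -- the four branch points
  obtain ⟨x1, hx1m, hFx1⟩ := intermediate_value_Ioo' hr1m.1.le
    hFcont.continuousOn (Set.mem_Ioo.mpr ⟨hFr1, hF0⟩)
  obtain ⟨x2, hx2m, hFx2⟩ := intermediate_value_Ioo hr1m.2.le
    hFcont.continuousOn (Set.mem_Ioo.mpr ⟨hFr1, hF1⟩)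
  obtain ⟨x3, hx3m, hFx3⟩ := intermediate_value_Ioo' hr2m.1.le
    hFcont.continuousOn (Set.mem_Ioo.mpr ⟨hFr2, hF1⟩)
  obtain ⟨x4, hx4m, hFx4⟩ := intermediate_value_Ioo hr2m.2.le
    hFcont.continuousOn (Set.mem_Ioo.mpr ⟨hFr2, hFs⟩)
  have h12 : x1 < x2 := hx1m.2.trans hx2m.1
  have h2le1 : x2 ≤ 1 := hx2m.2.le
  have h1lt3 : 1 < x3 := hx3m.1
  have h23 : x2 < x3 := lt_of_le_of_lt h2le1 h1lt3
  have h34 : x3 < x4 := hx3m.2.trans hx4m.1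
  have h13 : x1 < x3 := h12.trans h23
  have h14 : x1 < x4 := h13.trans h34
  have h24 : x2 < x4 := h23.trans h34
  -- factorization of F
  have hc4pos : 0 < (l1*(1+l2))^2 := by positivity
  have key := quartic_factor ((l1*(1+l2))^2)
    (4*b*l2*l1 - 2*(l1*(1+l2))*(l1+l2+l1*l2+a+b))
    ((l1+l2+l1*l2+a+b)^2 + 2*a*(l1*(1+l2)) - 4*b*l2*(l1+1))
    (-(2*a*(l1+l2+l1*l2+a+b))) (a^2) x1 x2 x3 x4 (ne_of_gt hc4pos)
    h12.ne h13.ne h14.ne h23.ne h24.ne h34.ne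
    (by linear_combination hFx1) (by linear_combination hFx2)
    (by linear_combination hFx3) (by linear_combination hFx4)
  refine ⟨x1, x2, x3, x4, hx1m.1, h12, h2le1, h1lt3, h34, hx4m.2, ?_, ?_⟩
  · intro x hx
    have e : (x * (l1 + l2 + l1 * l2 + a + b) - a - l1 * (1 + l2) * x ^ 2) ^ 2 -
          4 * (l2 * x * (l1 * (x - 1) - 1)) * (-b * x) =
        (l1*(1+l2))^2 * (((x - x1)*(x - x2))*((x - x3)*(x - x4))) := by
      linear_combination key x
    rw [e]
    rcases hx with hx | hx
    · have p12 : (x - x1)*(x - x2) < 0 :=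
        mul_neg_of_pos_of_neg (sub_pos.mpr hx.1) (sub_neg.mpr hx.2)
      have hxlt3 : x < x3 := lt_of_lt_of_le hx.2 (h2le1.trans h1lt3.le)
      have p34 : 0 < (x - x3)*(x - x4) :=
        mul_pos_of_neg_of_neg (sub_neg.mpr hxlt3) (sub_neg.mpr (hxlt3.trans h34))
      exact mul_neg_of_pos_of_neg hc4pos (mul_neg_of_neg_of_pos p12 p34)
    · have p12 : 0 < (x - x1)*(x - x2) :=
        mul_pos (sub_pos.mpr (h13.trans hx.1)) (sub_pos.mpr (h23.trans hx.1))
      have p34 : (x - x3)*(x - x4) < 0 :=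
        mul_neg_of_pos_of_neg (sub_pos.mpr hx.1) (sub_neg.mpr hx.2)
      exact mul_neg_of_pos_of_neg hc4pos (mul_neg_of_pos_of_neg p12 p34)
  · intro x hx
    have e : (x * (l1 + l2 + l1 * l2 + a + b) - a - l1 * (1 + l2) * x ^ 2) ^ 2 -
          4 * (l2 * x * (l1 * (x - 1) - 1)) * (-b * x) =
        (l1*(1+l2))^2 * (((x - x1)*(x - x2))*((x - x3)*(x - x4))) := by
      linear_combination key x
    rw [e]
    rcases hx with (hx | hx) | hx
    · have p12 : 0 < (x - x1)*(x - x2) :=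
        mul_pos_of_neg_of_neg (sub_neg.mpr hx) (sub_neg.mpr (hx.trans h12))
      have p34 : 0 < (x - x3)*(x - x4) :=
        mul_pos_of_neg_of_neg (sub_neg.mpr (hx.trans h13)) (sub_neg.mpr (hx.trans h14))
      exact mul_pos hc4pos (mul_pos p12 p34)
    · have p12 : 0 < (x - x1)*(x - x2) :=
        mul_pos (sub_pos.mpr (h12.trans hx.1)) (sub_pos.mpr hx.1)
      have p34 : 0 < (x - x3)*(x - x4) :=
        mul_pos_of_neg_of_neg (sub_neg.mpr hx.2) (sub_neg.mpr (hx.2.trans h34))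
      exact mul_pos hc4pos (mul_pos p12 p34)
    · have p12 : 0 < (x - x1)*(x - x2) :=
        mul_pos (sub_pos.mpr (h14.trans hx)) (sub_pos.mpr (h24.trans hx))
      have p34 : 0 < (x - x3)*(x - x4) :=
        mul_pos (sub_pos.mpr (h34.trans hx)) (sub_pos.mpr hx)
      exact mul_pos hc4pos (mul_pos p12 p34)
end

section
/- Let λ1 > 0, λ2 > 0, a > 0, b > 0 be real with a + b ≤ 1, λ1 < a, and λ2 < b. Define â(y) := λ1·y·(λ2(y−1) − 1), b̂(y) := y·(λ1+λ2+λ1λ2+a+b) − b − λ2(1+λ1)·y², ĉ(y) := −a·y, and D_y(y) := b̂(y)² − 4·â(y)·ĉ(y). Then there exist real numbers y1, y2, y3, y4 with 0 ≤ y1 < y2 ≤ 1 < y3 < y4 < (1+λ2)/λ2 such that D_y(y) < 0 for all y ∈ (y1,y2) ∪ (y3,y4) and D_y(y) > 0 for all y ∈ (−∞,y1) ∪ (y2,y3) ∪ (y4,∞). -/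
set_option maxHeartbeats 1000000

open Polynomial in
/-- A quartic polynomial function with four distinct real roots factors as
leading coefficient times the product of linear factors. -/
lemma quartic_eq_prod (f : ℝ → ℝ) (p : Polynomial ℝ) (hdeg : p.natDegree = 4)
    (heval : ∀ y, p.eval y = f y) (y1 y2 y3 y4 : ℝ)
    (h12 : y1 < y2) (h23 : y2 < y3) (h34 : y3 < y4)
    (r1 : f y1 = 0) (r2 : f y2 = 0) (r3 : f y3 = 0) (r4 : f y4 = 0) :
    ∀ y, f y = p.leadingCoeff * ((y - y1) * ((y - y2) * ((y - y3) * (y - y4)))) := by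
  have hp0 : p ≠ 0 := by
    intro h; rw [h] at hdeg; simp at hdeg
  have hr1 : y1 ∈ p.roots := (Polynomial.mem_roots hp0).2 (by rw [Polynomial.IsRoot, heval]; exact r1)
  have hr2 : y2 ∈ p.roots := (Polynomial.mem_roots hp0).2 (by rw [Polynomial.IsRoot, heval]; exact r2)
  have hr3 : y3 ∈ p.roots := (Polynomial.mem_roots hp0).2 (by rw [Polynomial.IsRoot, heval]; exact r3)
  have hr4 : y4 ∈ p.roots := (Polynomial.mem_roots hp0).2 (by rw [Polynomial.IsRoot, heval]; exact r4)
  set m : Multiset ℝ := {y1, y2, y3, y4} with hm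
  have e12 : y1 ≠ y2 := ne_of_lt h12
  have e13 : y1 ≠ y3 := ne_of_lt (h12.trans h23)
  have e14 : y1 ≠ y4 := ne_of_lt ((h12.trans h23).trans h34)
  have e23 : y2 ≠ y3 := ne_of_lt h23
  have e24 : y2 ≠ y4 := ne_of_lt (h23.trans h34)
  have e34 : y3 ≠ y4 := ne_of_lt h34
  have hnd : m.Nodup := by
    simp [hm, e12, e13, e14, e23, e24, e34]
  have hle : m ≤ p.roots := by
    rw [Multiset.le_iff_count]
    intro x
    by_cases hx : x ∈ m
    · rw [Multiset.count_eq_one_of_mem hnd hx]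
      refine Multiset.one_le_count_iff_mem.2 ?_
      have : x = y1 ∨ x = y2 ∨ x = y3 ∨ x = y4 := by
        simpa [hm, Multiset.mem_cons, Multiset.mem_singleton] using hx
      rcases this with rfl | rfl | rfl | rfl <;> assumption
    · rw [Multiset.count_eq_zero.2 hx]; exact Nat.zero_le _
  have hcardm : Multiset.card m = 4 := by simp [hm]
  have hcard : Multiset.card p.roots = p.natDegree := by
    refine le_antisymm (Polynomial.card_roots' p) ?_
    rw [hdeg, ← hcardm]
    exact Multiset.card_le_card hle
  have hmeq : m = p.roots :=
    Multiset.eq_of_le_of_card_le hle (by rw [hcard, hdeg, hcardm])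
  have hfacteq := Polynomial.C_leadingCoeff_mul_prod_multiset_X_sub_C hcard
  intro y
  rw [← heval, ← hfacteq, ← hmeq]
  simp [hm, Multiset.map_cons, Multiset.prod_cons]

/-- Lemma 2, second part: the discriminant `D_y(y) = b̂(y)² − 4â(y)ĉ(y)` of the
kernel, viewed as a quadratic in `x`, has four real branch points
`0 ≤ y1 < y2 ≤ 1 < y3 < y4 < (1+λ2)/λ2`, is negative on
`(y1,y2) ∪ (y3,y4)` and positive on `(−∞,y1) ∪ (y2,y3) ∪ (y4,∞)`. -/
theorem branch_points_y (l1 l2 a b : ℝ)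
    (hl1 : 0 < l1) (hl2 : 0 < l2) (ha : 0 < a) (hb : 0 < b)
    (hab : a + b ≤ 1) (hst1 : l1 < a) (hst2 : l2 < b) :
    ∃ y1 y2 y3 y4 : ℝ,
      0 ≤ y1 ∧ y1 < y2 ∧ y2 ≤ 1 ∧ 1 < y3 ∧ y3 < y4 ∧ y4 < (1 + l2) / l2 ∧
      (∀ y : ℝ, y ∈ Set.Ioo y1 y2 ∪ Set.Ioo y3 y4 →
        (y * (l1 + l2 + l1 * l2 + a + b) - b - l2 * (1 + l1) * y ^ 2) ^ 2 -
          4 * (l1 * y * (l2 * (y - 1) - 1)) * (-a * y) < 0) ∧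
      (∀ y : ℝ, y ∈ Set.Iio y1 ∪ Set.Ioo y2 y3 ∪ Set.Ioi y4 →
        0 < (y * (l1 + l2 + l1 * l2 + a + b) - b - l2 * (1 + l1) * y ^ 2) ^ 2 -
          4 * (l1 * y * (l2 * (y - 1) - 1)) * (-a * y)) := by
  set K : ℝ := l1 + l2 + l1 * l2 + a + b with hK
  set bhf : ℝ → ℝ := fun y => y * K - b - l2 * (1 + l1) * y ^ 2 with hbhf
  set Dfun : ℝ → ℝ := fun y =>
    (y * K - b - l2 * (1 + l1) * y ^ 2) ^ 2 -
      4 * (l1 * y * (l2 * (y - 1) - 1)) * (-a * y) with hDf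
  have hstar : (1 : ℝ) < (1 + l2) / l2 := by
    rw [lt_div_iff₀ hl2]; linarith
  have hstarpos : (0 : ℝ) < (1 + l2) / l2 := by linarith
  have hbcont : Continuous bhf := by fun_prop
  have hDcont : Continuous Dfun := by fun_prop
  -- values of b̂
  have hb0 : bhf 0 = -b := by simp [hbhf]
  have hb1 : bhf 1 = l1 + a := by simp [hbhf, hK]; ring
  have hbstar : bhf ((1 + l2) / l2) = (1 + l2) / l2 * (a + b - 1) - b := by
    simp only [hbhf, hK]
    field_simp
    ring
  have hbstarneg : (1 + l2) / l2 * (a + b - 1) - b < 0 := by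
    have h1 : (1 + l2) / l2 * (a + b - 1) ≤ 0 :=
      mul_nonpos_of_nonneg_of_nonpos (le_of_lt hstarpos) (by linarith)
    linarith
  -- root of b̂ in (0,1)
  obtain ⟨yc, hycI, hyceq⟩ :=
    intermediate_value_Ioo (by norm_num : (0:ℝ) ≤ 1) hbcont.continuousOn
      (show (0:ℝ) ∈ Set.Ioo (bhf 0) (bhf 1) by
        rw [hb0, hb1]; constructor <;> linarith)
  -- root of b̂ in (1, (1+l2)/l2)
  obtain ⟨yd, hydI, hydeq⟩ :=
    intermediate_value_Ioo' (le_of_lt hstar) hbcont.continuousOn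
      (show (0:ℝ) ∈ Set.Ioo (bhf ((1 + l2) / l2)) (bhf 1) by
        rw [hb1, hbstar]; constructor <;> linarith)
  -- values of D
  have hD0 : Dfun 0 = b ^ 2 := by simp [hDf]
  have hD0pos : 0 < Dfun 0 := by rw [hD0]; positivity
  have hD1 : Dfun 1 = (a - l1) ^ 2 := by simp [hDf, hK]; ring
  have hD1pos : 0 < Dfun 1 := by
    rw [hD1]
    have : a - l1 ≠ 0 := by linarith
    positivity
  have hDstar : Dfun ((1 + l2) / l2) = ((1 + l2) / l2 * (a + b - 1) - b) ^ 2 := by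
    have hl2' : l2 ≠ 0 := ne_of_gt hl2
    simp only [hDf, hK]
    field_simp
    ring
  have hDstarpos : 0 < Dfun ((1 + l2) / l2) := by
    rw [hDstar]
    have : (1 + l2) / l2 * (a + b - 1) - b ≠ 0 := ne_of_lt hbstarneg
    positivity
  have hDroot : ∀ z : ℝ, bhf z = 0 → Dfun z = 4 * a * l1 * z ^ 2 * (l2 * (z - 1) - 1) := by
    intro z hz
    have hz' : z * K - b - l2 * (1 + l1) * z ^ 2 = 0 := hz
    simp only [hDf]
    rw [hz']
    ring
  have hDyc : Dfun yc < 0 := by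
    rw [hDroot yc hyceq]
    have h1 : l2 * (yc - 1) - 1 < 0 := by
      have h3 : l2 * (yc - 1) < 0 := mul_neg_of_pos_of_neg hl2 (by linarith [hycI.2])
      linarith
    have h2 : 0 < 4 * a * l1 * yc ^ 2 := by
      have := hycI.1; positivity
    exact mul_neg_of_pos_of_neg h2 h1
  have hDyd : Dfun yd < 0 := by
    rw [hDroot yd hydeq]
    have hlt : yd * l2 < 1 + l2 := by
      have := hydI.2
      rwa [lt_div_iff₀ hl2] at this
    have h1 : l2 * (yd - 1) - 1 < 0 := by linarith
    have h2 : 0 < 4 * a * l1 * yd ^ 2 := by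
      have h0 : (0:ℝ) < yd := by linarith [hydI.1]
      positivity
    exact mul_neg_of_pos_of_neg h2 h1
  -- the four branch points via IVT on D
  obtain ⟨y1, hy1I, hy1eq⟩ :=
    intermediate_value_Ioo' (le_of_lt hycI.1) hDcont.continuousOn
      (show (0:ℝ) ∈ Set.Ioo (Dfun yc) (Dfun 0) from ⟨hDyc, hD0pos⟩)
  obtain ⟨y2, hy2I, hy2eq⟩ :=
    intermediate_value_Ioo (le_of_lt hycI.2) hDcont.continuousOn
      (show (0:ℝ) ∈ Set.Ioo (Dfun yc) (Dfun 1) from ⟨hDyc, hD1pos⟩)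
  obtain ⟨y3, hy3I, hy3eq⟩ :=
    intermediate_value_Ioo' (le_of_lt hydI.1) hDcont.continuousOn
      (show (0:ℝ) ∈ Set.Ioo (Dfun yd) (Dfun 1) from ⟨hDyd, hD1pos⟩)
  obtain ⟨y4, hy4I, hy4eq⟩ :=
    intermediate_value_Ioo (le_of_lt hydI.2) hDcont.continuousOn
      (show (0:ℝ) ∈ Set.Ioo (Dfun yd) (Dfun ((1 + l2) / l2)) from ⟨hDyd, hDstarpos⟩)
  -- ordering
  have ho1 : 0 < y1 := hy1I.1
  have ho2 : y1 < yc := hy1I.2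
  have ho3 : yc < y2 := hy2I.1
  have ho4 : y2 < 1 := hy2I.2
  have ho5 : (1:ℝ) < y3 := hy3I.1
  have ho6 : y3 < yd := hy3I.2
  have ho7 : yd < y4 := hy4I.1
  have ho8 : y4 < (1 + l2) / l2 := hy4I.2
  -- polynomial and factorization
  set p : Polynomial ℝ :=
    Polynomial.C ((l2 * (1 + l1)) ^ 2) * Polynomial.X ^ 4 +
      Polynomial.C (4 * a * l1 * l2 - 2 * (l2 * (1 + l1)) * K) * Polynomial.X ^ 3 +
      Polynomial.C (K ^ 2 + 2 * (l2 * (1 + l1)) * b - 4 * a * l1 * (1 + l2)) * Polynomial.X ^ 2 +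
      Polynomial.C (-(2 * b * K)) * Polynomial.X + Polynomial.C (b ^ 2) with hp
  have hlcpos : (0:ℝ) < (l2 * (1 + l1)) ^ 2 := by positivity
  have hdeg : p.natDegree = 4 := by
    rw [hp]
    compute_degree!
    exact ⟨ne_of_gt hl2, by positivity⟩
  have hco : p.coeff 4 = (l2 * (1 + l1)) ^ 2 := by
    rw [hp]
    simp only [Polynomial.coeff_add, Polynomial.coeff_C_mul, Polynomial.coeff_X_pow,
      Polynomial.coeff_C, Polynomial.coeff_X]
    norm_num
  have hlc : p.leadingCoeff = (l2 * (1 + l1)) ^ 2 := by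
    rw [Polynomial.leadingCoeff, hdeg, hco]
  have heval : ∀ y, p.eval y = Dfun y := by
    intro y
    simp only [hp, hDf, hK, Polynomial.eval_add, Polynomial.eval_mul, Polynomial.eval_pow,
      Polynomial.eval_C, Polynomial.eval_X]
    ring
  have key : ∀ y, Dfun y =
      (l2 * (1 + l1)) ^ 2 * ((y - y1) * ((y - y2) * ((y - y3) * (y - y4)))) := by
    have h := quartic_eq_prod Dfun p hdeg heval y1 y2 y3 y4
      (by linarith) (by linarith) (by linarith) hy1eq hy2eq hy3eq hy4eq
    intro y
    rw [h y, hlc]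
  have keyraw : ∀ y : ℝ,
      (y * K - b - l2 * (1 + l1) * y ^ 2) ^ 2 -
        4 * (l1 * y * (l2 * (y - 1) - 1)) * (-a * y) =
      (l2 * (1 + l1)) ^ 2 * ((y - y1) * ((y - y2) * ((y - y3) * (y - y4)))) := by
    intro y
    have := key y
    simpa [hDf] using this
  refine ⟨y1, y2, y3, y4, le_of_lt ho1, by linarith, le_of_lt ho4, ho5, by linarith, ho8,
    ?_, ?_⟩
  · intro y hy
    rw [keyraw y]
    rcases hy with h | h
    · obtain ⟨ha1, ha2⟩ := h
      exact mul_neg_of_pos_of_neg hlcpos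
        (mul_neg_of_pos_of_neg (by linarith)
          (mul_neg_of_neg_of_pos (by linarith)
            (mul_pos_of_neg_of_neg (by linarith) (by linarith))))
    · obtain ⟨ha1, ha2⟩ := h
      exact mul_neg_of_pos_of_neg hlcpos
        (mul_neg_of_pos_of_neg (by linarith)
          (mul_neg_of_pos_of_neg (by linarith)
            (mul_neg_of_pos_of_neg (by linarith) (by linarith))))
  · intro y hy
    rw [keyraw y]
    rcases hy with (h | h) | h
    · have hy' : y < y1 := h
      exact mul_pos hlcpos
        (mul_pos_of_neg_of_neg (by linarith)
          (mul_neg_of_neg_of_pos (by linarith)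
            (mul_pos_of_neg_of_neg (by linarith) (by linarith))))
    · obtain ⟨ha1, ha2⟩ := h
      exact mul_pos hlcpos
        (mul_pos (by linarith)
          (mul_pos (by linarith)
            (mul_pos_of_neg_of_neg (by linarith) (by linarith))))
    · have hy' : y4 < y := h
      exact mul_pos hlcpos
        (mul_pos (by linarith)
          (mul_pos (by linarith)
            (mul_pos (by linarith) (by linarith))))
end

section
/- Let λ1 > 0, λ2 > 0, a > 0, b > 0 be real, let y be real with 0 < y < 1, and suppose D_y(y) := b̂(y)² − 4·â(y)·ĉ(y) < 0, where â(y) = λ1·y·(λ2(y−1) − 1), b̂(y) = y·(λ1+λ2+λ1λ2+a+b) − b − λ2(1+λ1)·y², ĉ(y) = −a·y. Then every complex root x of â(y)x² + b̂(y)x + ĉ(y) = 0 satisfies ‖x‖² = a/(λ1·(1+λ2−λ2·y)) and Re(x) = (y·(λ1+λ2+λ1λ2+a+b) − b − λ2(1+λ1)·y²)/(2·λ1·y·(1+λ2−λ2·y)). Moreover the map y ↦ a/(λ1·(1+λ2−λ2·y)) is strictly increasing on [0,1], so if in addition y ≤ y₂ for some y₂ ∈ (0,1], then ‖x‖² ≤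 a/(λ1·(1+λ2−λ2·y₂)). -/
lemma quad_root (A B C : ℝ) (hA : A ≠ 0) (hD : B^2 - 4*A*C < 0)
    (x : ℂ) (h : (A:ℂ)*x^2 + (B:ℂ)*x + (C:ℂ) = 0) :
    x.re = -B/(2*A) ∧ x.re^2 + x.im^2 = C/A := by
  have hre := congrArg Complex.re h
  have him := congrArg Complex.im h
  simp [pow_two, Complex.add_re, Complex.add_im, Complex.mul_re, Complex.mul_im] at hre him
  have hq : x.im ≠ 0 := by
    intro hq
    rw [hq] at hre
    have key : (2*A*x.re+B)^2 = B^2 - 4*A*C := by linear_combination 4*A*hre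
    nlinarith [sq_nonneg (2*A*x.re + B)]
  have hp : 2*A*x.re + B = 0 := by
    rcases mul_eq_zero.mp (show x.im * (2*A*x.re + B) = 0 by linear_combination him) with h' | h'
    · exact absurd h' hq
    · exact h'
  constructor
  · field_simp
    linarith
  · field_simp
    linear_combination -hre + x.re*hp

/-- Lemma 3, part 1: for `y` in the branch cut (where `D_y(y) < 0`), the complex
roots `x` of the kernel quadratic satisfy `‖x‖² = a/(λ1(1+λ2−λ2 y))` and the
stated formula for `Re(x)`; moreover `y ↦ a/(λ1(1+λ2−λ2 y))` is strictly
increasing on `[0,1]`, hence `‖x‖² ≤ a/(λ1(1+λ2−λ2 y₂))` whenever `y ≤ y₂`. -/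
theorem contour_M (l1 l2 a b : ℝ)
    (hl1 : 0 < l1) (hl2 : 0 < l2) (ha : 0 < a) (hb : 0 < b)
    (y : ℝ) (hy0 : 0 < y) (hy1 : y < 1)
    (hD : (y * (l1 + l2 + l1 * l2 + a + b) - b - l2 * (1 + l1) * y ^ 2) ^ 2 -
        4 * (l1 * y * (l2 * (y - 1) - 1)) * (-a * y) < 0) :
    (∀ x : ℂ,
      ((l1 * y * (l2 * (y - 1) - 1) : ℝ) : ℂ) * x ^ 2 +
        ((y * (l1 + l2 + l1 * l2 + a + b) - b - l2 * (1 + l1) * y ^ 2 : ℝ) : ℂ) * x +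
        ((-a * y : ℝ) : ℂ) = 0 →
      ‖x‖ ^ 2 = a / (l1 * (1 + l2 - l2 * y)) ∧
      x.re = (y * (l1 + l2 + l1 * l2 + a + b) - b - l2 * (1 + l1) * y ^ 2) /
        (2 * l1 * y * (1 + l2 - l2 * y))) ∧
    StrictMonoOn (fun t : ℝ => a / (l1 * (1 + l2 - l2 * t))) (Set.Icc 0 1) ∧
    (∀ y2 : ℝ, y2 ∈ Set.Ioc (0 : ℝ) 1 → y ≤ y2 →
      ∀ x : ℂ,
        ((l1 * y * (l2 * (y - 1) - 1) : ℝ) : ℂ) * x ^ 2 +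
          ((y * (l1 + l2 + l1 * l2 + a + b) - b - l2 * (1 + l1) * y ^ 2 : ℝ) : ℂ) * x +
          ((-a * y : ℝ) : ℂ) = 0 →
        ‖x‖ ^ 2 ≤ a / (l1 * (1 + l2 - l2 * y2))) := by
  have hd : 0 < 1 + l2 - l2 * y := by nlinarith
  have hAneg : l1 * y * (l2 * (y - 1) - 1) < 0 :=
    mul_neg_of_pos_of_neg (mul_pos hl1 hy0) (by nlinarith [mul_pos hl2 (sub_pos.mpr hy1)])
  have hA : l1 * y * (l2 * (y - 1) - 1) ≠ 0 := ne_of_lt hAneg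
  have hmain : ∀ x : ℂ,
      ((l1 * y * (l2 * (y - 1) - 1) : ℝ) : ℂ) * x ^ 2 +
        ((y * (l1 + l2 + l1 * l2 + a + b) - b - l2 * (1 + l1) * y ^ 2 : ℝ) : ℂ) * x +
        ((-a * y : ℝ) : ℂ) = 0 →
      ‖x‖ ^ 2 = a / (l1 * (1 + l2 - l2 * y)) ∧
      x.re = (y * (l1 + l2 + l1 * l2 + a + b) - b - l2 * (1 + l1) * y ^ 2) /
        (2 * l1 * y * (1 + l2 - l2 * y)) := by
    intro x hx
    obtain ⟨h1, h2⟩ := quad_root _ _ _ hA hD x hx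
    have hnorm : ‖x‖ ^ 2 = x.re ^ 2 + x.im ^ 2 := by
      rw [Complex.sq_norm, Complex.normSq_apply]; ring
    constructor
    · rw [hnorm, h2]
      rw [div_eq_div_iff hA (by positivity)]
      ring
    · rw [h1]
      rw [div_eq_div_iff (by positivity : (2 : ℝ) * (l1 * y * (l2 * (y - 1) - 1)) ≠ 0)
        (by positivity : (2 : ℝ) * l1 * y * (1 + l2 - l2 * y) ≠ 0)]
      ring
  refine ⟨hmain, ?_, ?_⟩
  · intro s hs t ht hst
    simp only
    have h1 : 0 < l1 * (1 + l2 - l2 * t) := by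
      have h := mul_le_mul_of_nonneg_left ht.2 hl2.le; nlinarith
    have h2 : l1 * (1 + l2 - l2 * t) < l1 * (1 + l2 - l2 * s) := by
      nlinarith [mul_pos (mul_pos hl1 hl2) (sub_pos.mpr hst)]
    exact div_lt_div_of_pos_left ha h1 h2
  · intro y2 hy2 hle x hx
    rw [(hmain x hx).1]
    have h1 : 0 < l1 * (1 + l2 - l2 * y2) := by
      have h := mul_le_mul_of_nonneg_left hy2.2 hl2.le; nlinarith
    have h2 : l1 * (1 + l2 - l2 * y2) ≤ l1 * (1 + l2 - l2 * y) := by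
      nlinarith [mul_nonneg (mul_pos hl1 hl2).le (sub_nonneg.mpr hle)]
    exact div_le_div_of_nonneg_left ha.le h1 h2
end

section
/- Consider the symmetric two-user capture model with p = 1. Let p̃ ∈ (0,1], α* ∈ (0,1], b ∈ [0,1), λ > 0 be real, define g(α) := α·(1 + α·(b−1)) and f(α) := ((2+λ)·(α + α²·(b−1)) + λ·α*·p̃)/(2·α*·p̃·(g(α) − λ)) for α with g(α) > λ, and set α̃ := α* if b ≥ (2α* − 1)/(2α*), and α̃ := 1/(2(1−b)) if b < (2α* − 1)/(2α*). If there exists α ∈ [0, α*] with g(α) > λ, then α̃ ∈ [0, α*], g(α̃) > λ, and f(α̃) ≤ f(α) for every α ∈ [0, α*] with g(α) > λ. -/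
lemma aux_mono (C K lam s t : ℝ) (hC : 0 < C) (hK : 0 ≤ K) (hlam : 0 < lam)
    (hs : lam < s) (hst : s ≤ t) :
    ((2 + lam) * t + K) / (C * (t - lam)) ≤ ((2 + lam) * s + K) / (C * (s - lam)) := by
  have hs' : 0 < C * (s - lam) := mul_pos hC (by linarith)
  have ht' : 0 < C * (t - lam) := mul_pos hC (by linarith)
  rw [div_le_div_iff₀ ht' hs']
  nlinarith [mul_nonneg (mul_nonneg hC.le (sub_nonneg.2 hst))
    (add_nonneg (mul_nonneg hlam.le (by linarith : (0:ℝ) ≤ 2 + lam)) hK)]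

/-- Lemma 6: the delay-optimal transmission probability for the symmetric
two-user capture model with `p = 1` is `α̃ = α*` if `b ≥ (2α*−1)/(2α*)`, and
`α̃ = 1/(2(1−b))` otherwise. -/
theorem optimal_transmission_probability (pt αs b lam : ℝ)
    (hpt0 : 0 < pt) (hpt1 : pt ≤ 1) (hαs0 : 0 < αs) (hαs1 : αs ≤ 1)
    (hb0 : 0 ≤ b) (hb1 : b < 1) (hlam : 0 < lam) :
    let g : ℝ → ℝ := fun α => α * (1 + α * (b - 1))
    let f : ℝ → ℝ := fun α =>
      ((2 + lam) * (α + α ^ 2 * (b - 1)) + lam * αs * pt) /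
        (2 * αs * pt * (g α - lam))
    let αt : ℝ := if b ≥ (2 * αs - 1) / (2 * αs) then αs else 1 / (2 * (1 - b))
    (∃ α ∈ Set.Icc (0 : ℝ) αs, lam < g α) →
      αt ∈ Set.Icc (0 : ℝ) αs ∧ lam < g αt ∧
        ∀ α ∈ Set.Icc (0 : ℝ) αs, lam < g α → f αt ≤ f α := by
  intro g f αt hex
  have hc : 0 < 1 - b := by linarith
  obtain ⟨α₀, hα₀, hgα₀⟩ := hex
  -- key facts about αt
  have hmain : αt ∈ Set.Icc (0:ℝ) αs ∧ ∀ α ∈ Set.Icc (0:ℝ) αs, g α ≤ g αt := by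
    by_cases hcase : b ≥ (2 * αs - 1) / (2 * αs)
    · have hαt : αt = αs := if_pos hcase
      have h1 : 2 * αs - 1 ≤ b * (2 * αs) := by
        rw [ge_iff_le, div_le_iff₀ (by positivity)] at hcase
        linarith
      refine ⟨by rw [hαt]; exact ⟨hαs0.le, le_refl _⟩, ?_⟩
      intro α hα
      rw [hαt]
      have h2 : 0 ≤ αs - α := by linarith [hα.2]
      have h3 : 0 ≤ 1 - (1 - b) * (αs + α) := by nlinarith [hα.1, hα.2]
      show α * (1 + α * (b - 1)) ≤ αs * (1 + αs * (b - 1))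
      nlinarith [mul_nonneg h2 h3]
    · have hαt : αt = 1 / (2 * (1 - b)) := if_neg hcase
      push_neg at hcase
      have h1 : b * (2 * αs) < 2 * αs - 1 := by
        rw [lt_div_iff₀ (by positivity)] at hcase
        linarith
      have h2 : 1 < 2 * αs * (1 - b) := by nlinarith
      have hle : 1 / (2 * (1 - b)) ≤ αs := by
        rw [div_le_iff₀ (by positivity)]
        nlinarith
      have hgαt : g αt = 1 / (4 * (1 - b)) := by
        rw [hαt]
        show (1 / (2 * (1 - b))) * (1 + (1 / (2 * (1 - b))) * (b - 1)) = 1 / (4 * (1 - b))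
        field_simp
        ring
      refine ⟨by rw [hαt]; exact ⟨by positivity, hle⟩, ?_⟩
      intro α hα
      rw [hgαt]
      show α * (1 + α * (b - 1)) ≤ 1 / (4 * (1 - b))
      rw [le_div_iff₀ (by positivity)]
      nlinarith [sq_nonneg (1 - 2 * (1 - b) * α)]
  obtain ⟨hmem, hmax⟩ := hmain
  have hgαt : lam < g αt := lt_of_lt_of_le hgα₀ (hmax α₀ hα₀)
  refine ⟨hmem, hgαt, ?_⟩
  intro α hα hgα
  have hf : ∀ x : ℝ, f x = ((2 + lam) * g x + lam * αs * pt) / (2 * αs * pt * (g x - lam)) := by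
    intro x
    show ((2 + lam) * (x + x ^ 2 * (b - 1)) + lam * αs * pt) /
        (2 * αs * pt * (x * (1 + x * (b - 1)) - lam)) = ((2 + lam) * (x * (1 + x * (b - 1))) + lam * αs * pt) / (2 * αs * pt * (x * (1 + x * (b - 1)) - lam))
    ring_nf
  rw [hf, hf]
  exact aux_mono (2 * αs * pt) (lam * αs * pt) lam (g α) (g αt)
    (by positivity) (by positivity) hlam hgα (hmax α hα)
end

section
/- Let b, A1, λ1, λ2, d1 be real with b > 0, A1 > 0, λ1 > 0, λ2 > 0, d1 < 0, and λ1 < A1 + d1·λ2/b. Define Z(x) := −λ1·(b + (1+λ2)·d1)·x² + ((λ1+λ2+λ1·λ2)·d1 + (b + d1)·A1)·x − A1·d1. Then Z(0) = −A1·d1 > 0 and Z(1) = b·A1 − λ1·b + λ2·d1 > 0. Moreover, if in addition b + (1+λ2)·d1 > 0, then there exist real numbers x⁻ < 0 and x⁺ > 1 with Z(x⁻) = 0 and Z(x⁺) = 0, i.e., Z has two real roots of opposite sign, the positive one lying strictly to the right of 1. -/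
/-- Appendix: positivity of the resultant polynomial `Z` at `0` and `1`, and
location of its two real roots of opposite sign when `b + (1+λ2)d1 > 0`. -/
theorem resultant_Z_roots (b A1 l1 l2 d1 : ℝ)
    (hb : 0 < b) (hA1 : 0 < A1) (hl1 : 0 < l1) (hl2 : 0 < l2)
    (hd1 : d1 < 0) (hstab : l1 < A1 + d1 * l2 / b) :
    let Z : ℝ → ℝ := fun x =>
      -l1 * (b + (1 + l2) * d1) * x ^ 2 +
        ((l1 + l2 + l1 * l2) * d1 + (b + d1) * A1) * x - A1 * d1
    Z 0 = -A1 * d1 ∧ 0 < Z 0 ∧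
      Z 1 = b * A1 - l1 * b + l2 * d1 ∧ 0 < Z 1 ∧
      (0 < b + (1 + l2) * d1 →
        ∃ xm xp : ℝ, xm < 0 ∧ 1 < xp ∧ Z xm = 0 ∧ Z xp = 0) := by
  intro Z
  have hstab' : l1 * b < A1 * b + d1 * l2 := by
    have := (mul_lt_mul_of_pos_right hstab hb)
    have hne : b ≠ 0 := ne_of_gt hb
    field_simp at this
    linarith
  have hZ0 : Z 0 = -A1 * d1 := by simp [Z]
  have hZ0pos : 0 < Z 0 := by rw [hZ0]; nlinarith
  have hZ1 : Z 1 = b * A1 - l1 * b + l2 * d1 := by simp [Z]; ring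
  have hZ1pos : 0 < Z 1 := by rw [hZ1]; nlinarith
  refine ⟨hZ0, hZ0pos, hZ1, hZ1pos, ?_⟩
  intro hpos
  set A : ℝ := l1 * (b + (1 + l2) * d1) with hA
  set B : ℝ := (l1 + l2 + l1 * l2) * d1 + (b + d1) * A1 with hB
  set C : ℝ := -A1 * d1 with hC
  have hApos : 0 < A := mul_pos hl1 hpos
  have hCpos : 0 < C := by rw [hC]; nlinarith
  have hZeq : ∀ x : ℝ, Z x = -A * x ^ 2 + B * x + C := by
    intro x; simp [Z, hA, hB, hC]; ring
  set x0 : ℝ := (|B| + C) / A + 1 with hx0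
  have hx0one : 1 < x0 := by
    have : 0 < (|B| + C) / A := div_pos (by positivity) hApos
    rw [hx0]; linarith
  have hAx0 : A * x0 = |B| + C + A := by
    rw [hx0]; field_simp
  have hBabs : B ≤ |B| := le_abs_self B
  have hBabs' : -B ≤ |B| := neg_le_abs B
  have hZx0 : Z x0 < 0 := by
    rw [hZeq]
    nlinarith [mul_pos hApos (mul_pos (lt_trans one_pos hx0one) (lt_trans one_pos hx0one))]
  have hZmx0 : Z (-x0) < 0 := by
    rw [hZeq]
    nlinarith [mul_pos hApos (mul_pos (lt_trans one_pos hx0one) (lt_trans one_pos hx0one))]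
  have hcont : Continuous Z := by
    have : Z = fun x : ℝ =>
        -l1 * (b + (1 + l2) * d1) * x ^ 2 +
          ((l1 + l2 + l1 * l2) * d1 + (b + d1) * A1) * x - A1 * d1 := rfl
    rw [this]; fun_prop
  -- negative root
  have hsub1 : Set.Icc (Z (-x0)) (Z 0) ⊆ Z '' Set.Icc (-x0) 0 :=
    intermediate_value_Icc (by linarith) hcont.continuousOn
  obtain ⟨xm, hxm_mem, hxm⟩ := hsub1 ⟨le_of_lt hZmx0, le_of_lt hZ0pos⟩
  have hxmneg : xm < 0 := by
    rcases lt_or_eq_of_le hxm_mem.2 with h | h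
    · exact h
    · exfalso; rw [h] at hxm; rw [hxm] at hZ0pos; exact lt_irrefl _ hZ0pos
  -- root greater than 1
  have hsub2 : Set.Icc (Z x0) (Z 1) ⊆ Z '' Set.Icc 1 x0 :=
    intermediate_value_Icc' (le_of_lt hx0one) hcont.continuousOn
  obtain ⟨xp, hxp_mem, hxp⟩ := hsub2 ⟨le_of_lt hZx0, le_of_lt hZ1pos⟩
  have hxppos : 1 < xp := by
    rcases lt_or_eq_of_le hxp_mem.1 with h | h
    · exact h
    · exfalso; rw [← h] at hxp; rw [hxp] at hZ1pos; exact lt_irrefl _ hZ1pos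
  exact ⟨xm, xp, hxmneg, hxppos, hxm, hxp⟩
end

section
/- Let a, A2, λ1, λ2, d2 be real with a > 0, A2 > 0, λ1 > 0, λ2 > 0, d2 < 0, and λ2 < A2 + d2·λ1/a. Define S(y) := −λ2·(a + (1+λ1)·d2)·y² + ((λ1+λ2+λ1·λ2)·d2 + A2·(d2 + a))·y − A2·d2. Then S(0) = −A2·d2 > 0 and S(1) = a·A2 − λ2·a + λ1·d2 > 0. Moreover, if in addition a + (1+λ1)·d2 > 0, then there exist real numbers y⁻ < 0 and y⁺ > 1 with S(y⁻) = 0 and S(y⁺) = 0. -/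
/-- A downward quadratic positive at 0 and 1 has a root below 0 and a root above 1. -/
lemma quad_aux (C B E : ℝ) (hC : C < 0) (hE : 0 < E) (h1 : 0 < C + B + E) :
    ∃ ym yp : ℝ, ym < 0 ∧ 1 < yp ∧
      C * ym ^ 2 + B * ym + E = 0 ∧ C * yp ^ 2 + B * yp + E = 0 := by
  set f : ℝ → ℝ := fun y => C * y ^ 2 + B * y + E with hf
  have hcont : Continuous f := by fun_prop
  have hCpos : 0 < -C := by linarith
  have hCne : C ≠ 0 := ne_of_lt hC
  obtain ⟨M, hM⟩ : ∃ M : ℝ, M = (|B| + E + 1) / (-C) + 1 := ⟨_, rfl⟩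
  have hM1 : 1 < M := by
    have : 0 < (|B| + E + 1) / (-C) := div_pos (by positivity) hCpos
    linarith
  have hMpos : 0 < M := by linarith
  have key : ∀ y : ℝ, M ≤ |y| → f y < 0 := by
    intro y hy
    have habs : 0 < |y| := lt_of_lt_of_le hMpos hy
    have h1' : f y ≤ C * |y| ^ 2 + |B| * |y| + E := by
      have hsq : y ^ 2 = |y| ^ 2 := (sq_abs y).symm
      have hby : B * y ≤ |B| * |y| := by
        calc B * y ≤ |B * y| := le_abs_self _
        _ = |B| * |y| := abs_mul _ _
      simp only [hf]; nlinarith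
    have hdiv : (|B| + E + 1) / (-C) ≤ |y| := by linarith
    have h2 : C * |y| + |B| ≤ -(E + 1) := by
      have hle : C * |y| ≤ C * ((|B| + E + 1) / (-C)) :=
        mul_le_mul_of_nonpos_left hdiv (le_of_lt hC)
      have heq : C * ((|B| + E + 1) / (-C)) = -(|B| + E + 1) := by
        field_simp
      linarith
    have h4 : (C * |y| + |B|) * |y| ≤ -(E + 1) * |y| :=
      mul_le_mul_of_nonneg_right h2 (le_of_lt habs)
    have h5 : -(E + 1) * |y| ≤ -(E + 1) * 1 := by nlinarith [le_trans (le_of_lt hM1) hy]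
    nlinarith
  have hf0 : f 0 = E := by simp [hf]
  have hf1 : f 1 = C + B + E := by simp [hf]
  have hSnegM : f (-M) < 0 := key (-M) (by rw [abs_neg, abs_of_pos hMpos])
  have hSposM : f M < 0 := key M (by rw [abs_of_pos hMpos])
  obtain ⟨ym, hymmem, hymval⟩ :=
    intermediate_value_Icc (by linarith : -M ≤ (0:ℝ)) hcont.continuousOn
      (by rw [hf0]; constructor <;> linarith : (0:ℝ) ∈ Set.Icc (f (-M)) (f 0))
  obtain ⟨yp, hypmem, hypval⟩ :=
    intermediate_value_Icc' (by linarith : (1:ℝ) ≤ M) hcont.continuousOn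
      (by rw [hf1]; constructor <;> linarith : (0:ℝ) ∈ Set.Icc (f M) (f 1))
  refine ⟨ym, yp, ?_, ?_, hymval, hypval⟩
  · rcases lt_or_eq_of_le hymmem.2 with h | h
    · exact h
    · exfalso; rw [h] at hymval; rw [hymval] at hf0; linarith
  · rcases lt_or_eq_of_le hypmem.1 with h | h
    · exact h
    · exfalso; rw [← h] at hypval; rw [hypval] at hf1; linarith

/-- Appendix: positivity of the polynomial `S` at `0` and `1`, and location of
its two real roots when `a + (1+λ1)d2 > 0`. -/
theorem polynomial_S_roots (a A2 l1 l2 d2 : ℝ)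
    (ha : 0 < a) (hA2 : 0 < A2) (hl1 : 0 < l1) (hl2 : 0 < l2)
    (hd2 : d2 < 0) (hstab : l2 < A2 + d2 * l1 / a) :
    let S : ℝ → ℝ := fun y =>
      -l2 * (a + (1 + l1) * d2) * y ^ 2 +
        ((l1 + l2 + l1 * l2) * d2 + A2 * (d2 + a)) * y - A2 * d2
    S 0 = -A2 * d2 ∧ 0 < S 0 ∧
      S 1 = a * A2 - l2 * a + l1 * d2 ∧ 0 < S 1 ∧
      (0 < a + (1 + l1) * d2 →
        ∃ ym yp : ℝ, ym < 0 ∧ 1 < yp ∧ S ym = 0 ∧ S yp = 0) := by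
  intro S
  have hS0 : S 0 = -A2 * d2 := by simp [S]
  have hS0pos : 0 < S 0 := by rw [hS0]; nlinarith
  have hS1 : S 1 = a * A2 - l2 * a + l1 * d2 := by simp [S]; ring
  have hmul : l2 * a < A2 * a + d2 * l1 := by
    have h := mul_lt_mul_of_pos_right hstab ha
    rw [add_mul, div_mul_cancel₀ _ (ne_of_gt ha)] at h
    linarith
  have hS1pos : 0 < S 1 := by rw [hS1]; linarith
  refine ⟨hS0, hS0pos, hS1, hS1pos, ?_⟩
  intro hc
  obtain ⟨ym, yp, hym, hyp, hvm, hvp⟩ :=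
    quad_aux (-l2 * (a + (1 + l1) * d2)) ((l1 + l2 + l1 * l2) * d2 + A2 * (d2 + a))
      (-A2 * d2) (by nlinarith) (by nlinarith) (by rw [hS1] at hS1pos; nlinarith)
  refine ⟨ym, yp, hym, hyp, ?_, ?_⟩
  · simp only [S]; linarith [hvm]
  · simp only [S]; linarith [hvp]
end
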